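/- arXiv:math/0607253 — 2 statements merged into one kernel-verified Lean document; each statement's English description precedes it below -/
import Mathlib

section
/- (Large deviation upper bound.) Suppose ∫_{[0,∞)} e^{θx} dF(x) < ∞ for some θ > 0, and let h : ℕ → ℕ satisfy lim_{n→∞} h(n)/ln n = +∞. Let β = inf{v ≥ 0 : ℙ[t(e) ≤ v] > 0}. Then for every closed subset 𝓕 of [β,+∞), limsup_{n→∞} (1/(n^{d−1}h(n))) ln ℙ[φ_{n^{d−1},h(n)}/n^{d−1} ∈ 𝓕] ≤ −inf_{𝓕} ψ. -/
open MeasureTheory ProbabilityTheory Filter Set Topology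
open scoped ENNReal NNReal symmDiff

noncomputable section

namespace FirstPassagePercolation

/-! ### The lattice and its edges.
The ambient dimension of the paper is `d = D + 1` (so `d ≥ 2` reads `1 ≤ D`);
the last coordinate is the vertical one. -/

/-- Vertices of `ℤ^(D+1)`. -/
abbrev V (D : ℕ) := Fin (D + 1) → ℤ

/-- Two vertices are adjacent (joined by an edge of `𝔼^d`) iff their `L¹` distance is `1`. -/
def adj {D : ℕ} (x y : V D) : Prop := (∑ i, |x i - y i|) = 1

/-- The unordered pairs of vertices which are edges of the lattice. -/
def IsEdge {D : ℕ} (e : Sym2 (V D)) : Prop := ∃ x y : V D, e = s(x, y) ∧ adj x y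

/-- The type of edges of the lattice. -/
abbrev Edge (D : ℕ) := {e : Sym2 (V D) // IsEdge e}

/-- A configuration of capacities; only the values on edges are relevant. -/
abbrev Config (D : ℕ) := Sym2 (V D) → ℝ

/-- The open segment joining two lattice points, inside `ℝ^(D+1)`. -/
def seg {D : ℕ} (x y : V D) : Set (Fin (D + 1) → ℝ) :=
  {p | ∃ s : ℝ, 0 < s ∧ s < 1 ∧ ∀ i, p i = (1 - s) * (x i : ℝ) + s * (y i : ℝ)}

/-- The edge joining `x` and `y` is included in the region `R` of `ℝ^(D+1)`:
they are adjacent and the open segment joining them lies in `R`. -/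
def edgeIn {D : ℕ} (R : Set (Fin (D + 1) → ℝ)) (x y : V D) : Prop :=
  adj x y ∧ seg x y ⊆ R

/-! ### Boxes, streams and maximal flows. -/

/-- The box `∏_{i<D} (aᵢ, bᵢ] × (m₀, m₁]`, as a subset of `ℝ^(D+1)`. -/
def box {D : ℕ} (a b : Fin D → ℤ) (m₀ m₁ : ℤ) : Set (Fin (D + 1) → ℝ) :=
  {p | (∀ i : Fin D, (a i : ℝ) < p i.castSucc ∧ p i.castSucc ≤ (b i : ℝ)) ∧
    (m₀ : ℝ) < p (Fin.last D) ∧ p (Fin.last D) ≤ (m₁ : ℝ)}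

/-- The lattice points of the box `∏ (aᵢ, bᵢ] × (m₀, m₁]`. -/
def memBox {D : ℕ} (a b : Fin D → ℤ) (m₀ m₁ : ℤ) (x : V D) : Prop :=
  (∀ i : Fin D, a i < x i.castSucc ∧ x i.castSucc ≤ b i) ∧
    m₀ < x (Fin.last D) ∧ x (Fin.last D) ≤ m₁

/-- The `i`-th coordinate vector. -/
def unit {D : ℕ} (i : Fin (D + 1)) : V D := fun j => if j = i then 1 else 0

/-- A stream `(g, o)` in the box `∏ (aᵢ, bᵢ] × (m₀, m₁]`, encoded by the skew-symmetric
function `f`, where `f x y` is the net amount of fluid flowing from `x` to `y`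
(`f x y = g e` if `o e` is oriented from `x` to `y`, and `- g e` otherwise):
`g` is nonnegative, bounded by the capacities on the edges included in the box, supported
on those edges, and fluid is conserved at every vertex of the box not on the top face. -/
structure IsStream {D : ℕ} (t : Config D) (a b : Fin D → ℤ) (m₀ m₁ : ℤ)
    (f : V D → V D → ℝ) : Prop where
  skew : ∀ x y, f x y = - f y x
  supported : ∀ x y, f x y ≠ 0 → edgeIn (box a b m₀ m₁) x y
  capacity : ∀ x y, edgeIn (box a b m₀ m₁) x y → f x y ≤ t s(x, y)
  conservation : ∀ x : V D, memBox a b m₀ m₁ x → x (Fin.last D) ≠ m₁ →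
    (∑ i : Fin (D + 1), (f x (x + unit i) + f x (x - unit i))) = 0

/-- The vertex over the base point `y` at height `h`. -/
def vert {D : ℕ} (y : Fin D → ℤ) (h : ℤ) : V D := Fin.snoc y h

/-- The lattice points of the base rectangle `∏ (aᵢ, bᵢ]`. -/
def base {D : ℕ} (a b : Fin D → ℤ) : Finset (Fin D → ℤ) :=
  Finset.Icc (fun i => a i + 1) b

/-- The value of a stream: the net amount of fluid entering the top face `F_{m₁}`. -/
def streamValue {D : ℕ} (a b : Fin D → ℤ) (m₁ : ℤ) (f : V D → V D → ℝ) : ℝ :=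
  ∑ y ∈ base a b, f (vert y (m₁ - 1)) (vert y m₁)

/-- The maximal flow `φ_B` from the bottom to the top of the box `∏ (aᵢ, bᵢ] × (m₀, m₁]`. -/
def maxFlow {D : ℕ} (t : Config D) (a b : Fin D → ℤ) (m₀ m₁ : ℤ) : ℝ :=
  sSup {v | ∃ f, IsStream t a b m₀ m₁ f ∧ v = streamValue a b m₁ f}

/-- `φ_{n^{d-1}, h}` : the maximal flow through the cylinder `(0,n]^{d-1} × (0,h]`
from its bottom to its top. -/
def phi {D : ℕ} (t : Config D) (n h : ℕ) : ℝ :=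
  maxFlow t (fun _ => 0) (fun _ => (n : ℤ)) 0 (h : ℤ)

/-! ### The discretized capacities. -/

/-- The discretized capacities `t^k(e) = ⌊k t(e)⌋ / k`. -/
def discConfig {D : ℕ} (k : ℕ) (t : Config D) : Config D :=
  fun e => (⌊(k : ℝ) * t e⌋ : ℝ) / (k : ℝ)

/-- `φ^k_{n^{d-1}, h}` : the maximal flow for the discretized capacities `t^k`. -/
def phiK {D : ℕ} (k : ℕ) (t : Config D) (n h : ℕ) : ℝ := phi (discConfig k t) n h

/-- A discrete stream (for the discretized capacities `t^k`), as arising from a family of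
edge-disjoint paths in the multigraph where each edge `e` is replaced by `k t^k(e)` parallel
unit-capacity copies: it is a stream for `t^k` whose values are in `ℕ/k`, every edge with an
endpoint at the bottom (resp. top) level is oriented away from the bottom (resp. towards the
top), and `g` vanishes on edges lying in the top face. -/
structure IsDiscreteStream {D : ℕ} (t : Config D) (k : ℕ) (a b : Fin D → ℤ) (m₀ m₁ : ℤ)
    (f : V D → V D → ℝ) : Prop where
  stream : IsStream (discConfig k t) a b m₀ m₁ f
  values : ∀ x y, ∃ m : ℕ, |f x y| = (m : ℝ) / (k : ℝ)
  bottomOut : ∀ x y : V D, x (Fin.last D) = m₀ → adj x y → 0 ≤ f x y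
  topIn : ∀ x y : V D, y (Fin.last D) = m₁ → x (Fin.last D) ≠ m₁ → adj x y → 0 ≤ f x y
  topZero : ∀ x y : V D, x (Fin.last D) = m₁ → y (Fin.last D) = m₁ → f x y = 0

/-- The truncated projection `π^{λ,n}_{h'}(g, x)` of a (discrete) stream on the vertical edge
above the base point `x` between the heights `h'` and `h' + 1`. -/
def proj {D : ℕ} (lam : ℝ) (n : ℕ) (h' : ℤ) (f : V D → V D → ℝ) (x : Fin D → ℤ) : ℝ :=
  min (f (vert x h') (vert x (h' + 1))) ((⌊lam * (n : ℝ) ^ D⌋ : ℝ) + 1)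

/-! ### Cuts and the constant `ν`. -/

/-- A path in the region `R` from `x` to `y` avoiding the set of edges `E`. -/
def pathAvoid {D : ℕ} (R : Set (Fin (D + 1) → ℝ)) (E : Set (Sym2 (V D))) (x y : V D) : Prop :=
  ∃ (n : ℕ) (γ : ℕ → V D), γ 0 = x ∧ γ n = y ∧
    ∀ i < n, edgeIn R (γ i) (γ (i + 1)) ∧ s(γ i, γ (i + 1)) ∉ E

/-- The infinite cylinder `S × ℝ` over the base rectangle `S = ∏ (aᵢ, bᵢ]`. -/
def cylinder {D : ℕ} (a b : Fin D → ℤ) : Set (Fin (D + 1) → ℝ) :=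
  {p | ∀ i : Fin D, (a i : ℝ) < p i.castSucc ∧ p i.castSucc ≤ (b i : ℝ)}

/-- The lattice points of the infinite cylinder `S × ℝ`. -/
def memCylinder {D : ℕ} (a b : Fin D → ℤ) (x : V D) : Prop :=
  ∀ i : Fin D, a i < x i.castSucc ∧ x i.castSucc ≤ b i

/-- `E` is a set of edges of `S × ℝ` separating `-∞` from `+∞` over `S`: for some `N > 0`
there is no path from `S × {-N}` to `S × {N}` in `(S × ℝ) ∖ E`. -/
def Separates {D : ℕ} (a b : Fin D → ℤ) (E : Set (Sym2 (V D))) : Prop :=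
  (∀ e ∈ E, ∃ x y, e = s(x, y) ∧ edgeIn (cylinder a b) x y) ∧
  ∃ N : ℤ, 0 < N ∧ ∀ x y : V D,
    memCylinder a b x → x (Fin.last D) = -N →
    memCylinder a b y → y (Fin.last D) = N →
    ¬ pathAvoid (cylinder a b) E x y

/-- A cut over `S`: a separating set of edges, no proper subset of which separates. -/
def IsCutOver {D : ℕ} (a b : Fin D → ℤ) (E : Set (Sym2 (V D))) : Prop :=
  Separates a b E ∧ ∀ E' ⊂ E, ¬ Separates a b E'

/-- The inner vertex boundary `∂ⁱⁿ (S × ℝ)` of the infinite cylinder. -/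
def innerBdry {D : ℕ} (a b : Fin D → ℤ) : Set (V D) :=
  {x | memCylinder a b x ∧ ∃ y : V D, adj x y ∧ ¬ memCylinder a b y}

/-- Condition `(*)` : the edges of `E` with both endpoints on the inner boundary of `S × ℝ`
are vertical edges contained in `ℝ^{d-1} × [0,1]`. -/
def CondStar {D : ℕ} (a b : Fin D → ℤ) (E : Set (Sym2 (V D))) : Prop :=
  ∀ e ∈ E, (∃ x y, e = s(x, y) ∧ x ∈ innerBdry a b ∧ y ∈ innerBdry a b) →
    ∃ x : V D, e = s(x, x + unit (Fin.last D)) ∧ x (Fin.last D) = 0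

/-- `τ(S) = inf { V(E) | E is a cut over S satisfying (*) }`, with `V(E) = ∑_{e ∈ E} t(e)`,
valued in `[0, +∞]`. -/
def tauRect {D : ℕ} (t : Config D) (a b : Fin D → ℤ) : ℝ≥0∞ :=
  ⨅ E : {E : Set (Sym2 (V D)) // IsCutOver a b E ∧ CondStar a b E},
    ∑' e : E.val, ENNReal.ofReal (t e.val)

/-- `τ_{k^{d-1}} = τ((0,k]^{d-1})`. -/
def tau {D : ℕ} (t : Config D) (k : ℕ) : ℝ≥0∞ :=
  tauRect t (fun _ => 0) (fun _ => (k : ℤ))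

/-! ### Probabilistic set-up. -/

/-- The random capacities `(t(e), e ∈ 𝔼^d)` are nonnegative, independent and identically
distributed, with common distribution (function `F`, i.e. law) `ρ`. -/
def IIDCapacities {D : ℕ} {Ω : Type*} [MeasurableSpace Ω] (P : Measure Ω)
    (t : Ω → Config D) (ρ : Measure ℝ) : Prop :=
  (∀ ω e, 0 ≤ t ω e) ∧ ρ (Set.Iio 0) = 0 ∧
    iIndepFun (m := fun _ : Edge D => (inferInstance : MeasurableSpace ℝ))
      (fun (e : Edge D) ω => t ω e.val) P ∧
    ∀ e : Edge D, Measure.map (fun ω => t ω e.val) P = ρ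

open Classical in
/-- `- ln p ∈ [0, +∞]`, for `p ∈ [0,1]` (equal to `+∞` iff `p = 0`). -/
def negLog (p : ℝ≥0∞) : ℝ≥0∞ :=
  if p = 0 then ⊤ else ENNReal.ofReal (- Real.log p.toReal)

/-- The height function satisfies `lim_n h(n) / ln n = +∞`. -/
def HGrowth (h : ℕ → ℕ) : Prop :=
  Tendsto (fun n => (h n : ℝ) / Real.log n) atTop atTop

/-- The sequence `- (1 / (n^{d-1} h(n))) ln ℙ[φ_{n^{d-1},h(n)} ≥ λ n^{d-1}]`. -/
def psiSeq {D : ℕ} {Ω : Type*} [MeasurableSpace Ω] (P : Measure Ω) (t : Ω → Config D)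
    (h : ℕ → ℕ) (lam : ℝ) (n : ℕ) : ℝ≥0∞ :=
  negLog (P {ω | lam * (n : ℝ) ^ D ≤ phi (t ω) n (h n)}) /
    ((n : ℝ≥0∞) ^ D * (h n : ℝ≥0∞))

/-- `β = inf {v ≥ 0 | ℙ[t(e) ≤ v] > 0}`. -/
def betaOf (ρ : Measure ℝ) : ℝ := sInf {v : ℝ | 0 ≤ v ∧ 0 < ρ (Set.Iic v)}

/-- `μ = sup {λ | F([0,λ)) < 1}`. -/
def muSup (ρ : Measure ℝ) : ℝ := sSup {x : ℝ | ρ (Set.Iio x) < 1}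

private lemma negLog_le_negLog {p q : ℝ≥0∞} (hpq : p ≤ q) (hq : q ≠ ⊤) :
    negLog q ≤ negLog p := by
  unfold negLog
  split_ifs with h1 h2 h2
  · exact le_top
  · exact absurd (le_antisymm (h1 ▸ hpq) zero_le) h2
  · exact le_top
  · apply ENNReal.ofReal_le_ofReal
    apply neg_le_neg
    exact Real.log_le_log (ENNReal.toReal_pos h2 (ne_top_of_le_ne_top hq hpq))
      ((ENNReal.toReal_le_toReal (ne_top_of_le_ne_top hq hpq) hq).mpr hpq)

/-- large deviation upper bound: for every closed subset `𝓕` of `[β, ∞)`,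
`limsup (1/(n^{d-1}h(n))) ln ℙ[φ/n^{d-1} ∈ 𝓕] ≤ - inf_𝓕 ψ`, stated here (after changing
signs) as `inf_𝓕 ψ ≤ liminf (1/(n^{d-1}h(n))) (- ln ℙ[φ/n^{d-1} ∈ 𝓕])` in `[0, +∞]`. -/
theorem ldp_upper_bound
    (D : ℕ) (hD : 1 ≤ D) (Ω : Type*) [MeasurableSpace Ω]
    (P : Measure Ω) [IsProbabilityMeasure P]
    (t : Ω → Config D) (ρ : Measure ℝ) [IsProbabilityMeasure ρ]
    (hcap : IIDCapacities P t ρ)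
    (hexp : ∃ θ : ℝ, 0 < θ ∧ ∫⁻ x, ENNReal.ofReal (Real.exp (θ * x)) ∂ρ ≠ ⊤)
    (h : ℕ → ℕ) (hh : HGrowth h)
    (psi : ℝ → ℝ≥0∞)
    (hpsi : ∀ lam : ℝ, 0 ≤ lam → Tendsto (psiSeq P t h lam) atTop (𝓝 (psi lam)))
    (F : Set ℝ) (hFc : IsClosed F) (hFs : F ⊆ Set.Ici (betaOf ρ)) :
    (⨅ lam ∈ F, psi lam) ≤
      Filter.liminf (fun n : ℕ =>
        negLog (P {ω | phi (t ω) n (h n) / (n : ℝ) ^ D ∈ F}) /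
          ((n : ℝ≥0∞) ^ D * (h n : ℝ≥0∞))) atTop := by
  rcases F.eq_empty_or_nonempty with hF | hF
  · subst hF
    have htop : ∀ n : ℕ,
        negLog (P {ω | phi (t ω) n (h n) / (n : ℝ) ^ D ∈ (∅ : Set ℝ)}) /
          ((n : ℝ≥0∞) ^ D * (h n : ℝ≥0∞)) = ⊤ := by
      intro n
      have he : {ω | phi (t ω) n (h n) / (n : ℝ) ^ D ∈ (∅ : Set ℝ)} = ∅ := by simp
      rw [he, measure_empty, negLog, if_pos rfl, ENNReal.top_div_of_ne_top]
      exact ENNReal.mul_ne_top (ENNReal.pow_ne_top (ENNReal.natCast_ne_top n))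
        (ENNReal.natCast_ne_top _)
    calc (⨅ lam ∈ (∅ : Set ℝ), psi lam) ≤ ⊤ := le_top
      _ = Filter.liminf (fun _ : ℕ => (⊤ : ℝ≥0∞)) atTop := (Filter.liminf_const _).symm
      _ ≤ _ := Filter.liminf_le_liminf (Filter.Eventually.of_forall fun n => (htop n).ge)
  · set lam0 := sInf F with hl
    have hbdd : BddBelow F := ⟨betaOf ρ, hFs⟩
    have hmem : lam0 ∈ F := hFc.csInf_mem hF hbdd
    have hbeta : 0 ≤ betaOf ρ := Real.sInf_nonneg (fun v hv => hv.1)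
    have h0 : 0 ≤ lam0 := le_trans hbeta (hFs hmem)
    have key : ∀ᶠ n : ℕ in atTop, psiSeq P t h lam0 n ≤
        negLog (P {ω | phi (t ω) n (h n) / (n : ℝ) ^ D ∈ F}) /
          ((n : ℝ≥0∞) ^ D * (h n : ℝ≥0∞)) := by
      filter_upwards [eventually_ge_atTop 1] with n hn
      apply ENNReal.div_le_div_right
      apply negLog_le_negLog _ (measure_ne_top P _)
      apply measure_mono
      intro ω hω
      have hpos : (0 : ℝ) < (n : ℝ) ^ D := pow_pos (by exact_mod_cast hn) D
      exact (le_div_iff₀ hpos).mp (csInf_le hbdd hω)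
    calc (⨅ lam ∈ F, psi lam) ≤ psi lam0 := iInf₂_le lam0 hmem
      _ = Filter.liminf (psiSeq P t h lam0) atTop := ((hpsi lam0 h0).liminf_eq).symm
      _ ≤ _ := Filter.liminf_le_liminf key

end FirstPassagePercolation
end
end

section
/- (Subadditivity of τ.) Fix a configuration of capacities. If S₁ and S₂ are two disjoint hyper-rectangles in ℤ^{d−1} having a common side, so that S₁ ∪ S₂ is also a hyper-rectangle, then τ(S₁ ∪ S₂) ≤ τ(S₁) + τ(S₂). -/
open MeasureTheory ProbabilityTheory Filter Set Topology
open scoped ENNReal NNReal symmDiff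

noncomputable section

namespace FirstPassagePercolation

/-! ### Auxiliary development for the subadditivity of `τ` -/

section TauSubadd

open Finset in
lemma adj_abs_le {D : ℕ} {x y : V D} (h : adj x y) (k : Fin (D + 1)) : |x k - y k| ≤ 1 := by
  have h1 : (∑ i, |x i - y i|) = 1 := h
  have h2 := Finset.single_le_sum (f := fun i => |x i - y i|)
    (fun i _ => abs_nonneg _) (Finset.mem_univ k)
  exact le_trans h2 (le_of_eq h1)

lemma adj_symm' {D : ℕ} {x y : V D} (h : adj x y) : adj y x := by
  unfold adj at *
  rw [← h]
  exact Finset.sum_congr rfl fun i _ => abs_sub_comm _ _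

lemma unit_apply_self {D : ℕ} (c : Fin (D + 1)) : unit (D := D) c c = 1 := by simp [unit]

lemma unit_apply_ne {D : ℕ} {c k : Fin (D + 1)} (h : k ≠ c) : unit (D := D) c k = 0 := by
  simp [unit, h]

lemma add_unit_apply_self {D : ℕ} (x : V D) (c : Fin (D + 1)) :
    (x + unit c) c = x c + 1 := by simp [unit]

lemma add_unit_apply_ne {D : ℕ} (x : V D) {c k : Fin (D + 1)} (h : k ≠ c) :
    (x + unit c) k = x k := by simp [unit, h]

lemma sub_unit_apply_self {D : ℕ} (x : V D) (c : Fin (D + 1)) :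
    (x - unit c) c = x c - 1 := by simp [unit]

lemma sub_unit_apply_ne {D : ℕ} (x : V D) {c k : Fin (D + 1)} (h : k ≠ c) :
    (x - unit c) k = x k := by simp [unit, h]

lemma castSucc_ne_last' {D : ℕ} (i : Fin D) : i.castSucc ≠ Fin.last D :=
  (Fin.castSucc_lt_last i).ne

lemma adj_cases {D : ℕ} {x y : V D} (h : adj x y) :
    ∃ c, (y = x + unit c ∨ y = x - unit c) ∧ ∀ k ≠ c, y k = x k := by
  classical
  have hsum : (∑ i, |x i - y i|) = 1 := h
  have hex : ∃ c, x c ≠ y c := by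
    by_contra hc
    push_neg at hc
    have : (∑ i, |x i - y i|) = 0 := Finset.sum_eq_zero fun i _ => by rw [hc i]; simp
    omega
  obtain ⟨c, hc⟩ := hex
  have h1 : 1 ≤ |x c - y c| := Int.one_le_abs (sub_ne_zero.mpr hc)
  have hle : |x c - y c| ≤ 1 := adj_abs_le h c
  have habs : |x c - y c| = 1 := le_antisymm hle h1
  have hrest : ∀ k ≠ c, x k = y k := by
    intro k hk
    have hsplit : |x c - y c| + ∑ i ∈ Finset.univ.erase c, |x i - y i|
        = ∑ i, |x i - y i| :=
      Finset.add_sum_erase Finset.univ (fun i => |x i - y i|) (Finset.mem_univ c)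
    have hz : (∑ i ∈ Finset.univ.erase c, |x i - y i|) = 0 := by omega
    have := (Finset.sum_eq_zero_iff_of_nonneg (fun i _ => abs_nonneg _)).mp hz k
      (Finset.mem_erase.mpr ⟨hk, Finset.mem_univ k⟩)
    have := abs_eq_zero.mp this
    omega
  refine ⟨c, ?_, fun k hk => (hrest k hk).symm⟩
  rcases (abs_eq (by norm_num : (0:ℤ) ≤ 1)).mp habs with h' | h'
  · right; funext k
    by_cases hk : k = c
    · subst hk; rw [sub_unit_apply_self]; omega
    · rw [sub_unit_apply_ne _ hk]; exact (hrest k hk).symm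
  · left; funext k
    by_cases hk : k = c
    · subst hk; rw [add_unit_apply_self]; omega
    · rw [add_unit_apply_ne _ hk]; exact (hrest k hk).symm

lemma adj_add_unit {D : ℕ} (x : V D) (c : Fin (D + 1)) : adj x (x + unit c) := by
  unfold adj
  have h : ∀ k, |x k - (x + unit c) k| = if k = c then 1 else 0 := by
    intro k
    by_cases hk : k = c
    · subst hk; rw [add_unit_apply_self]; simp
    · rw [add_unit_apply_ne _ hk]; simp [hk]
  rw [Finset.sum_congr rfl fun k _ => h k]
  simp

lemma adj_sub_unit {D : ℕ} (x : V D) (c : Fin (D + 1)) : adj x (x - unit c) := by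
  unfold adj
  have h : ∀ k, |x k - (x - unit c) k| = if k = c then 1 else 0 := by
    intro k
    by_cases hk : k = c
    · subst hk; rw [sub_unit_apply_self]; simp
    · rw [sub_unit_apply_ne _ hk]; simp [hk]
  rw [Finset.sum_congr rfl fun k _ => h k]
  simp

/-! ### Segments and edges in cylinders -/

lemma seg_comm {D : ℕ} (x y : V D) : seg x y = seg y x := by
  ext p
  constructor <;> rintro ⟨s, h0, h1, hp⟩ <;>
    exact ⟨1 - s, by linarith, by linarith, fun i => by rw [hp i]; ring⟩

lemma edgeIn_symm {D : ℕ} {R : Set (Fin (D + 1) → ℝ)} {x y : V D} (h : edgeIn R x y) :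
    edgeIn R y x := ⟨adj_symm' h.1, by rw [seg_comm]; exact h.2⟩

lemma edgeIn_mono {D : ℕ} {R R' : Set (Fin (D + 1) → ℝ)} (hR : R ⊆ R') {x y : V D}
    (h : edgeIn R x y) : edgeIn R' x y := ⟨h.1, h.2.trans hR⟩

lemma mid_mem_seg {D : ℕ} (x y : V D) :
    (fun i => ((x i : ℝ) + (y i : ℝ)) / 2) ∈ seg x y :=
  ⟨1/2, by norm_num, by norm_num, fun i => by ring⟩

lemma edgeIn_closed {D : ℕ} {a b : Fin D → ℤ} {x y : V D}
    (h : edgeIn (cylinder a b) x y) (i : Fin D) :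
    a i ≤ x i.castSucc ∧ x i.castSucc ≤ b i := by
  have hm := h.2 (mid_mem_seg x y) i
  have hadj := adj_abs_le h.1 i.castSucc
  have h1 : (2 * (a i : ℝ)) < (x i.castSucc : ℝ) + (y i.castSucc : ℝ) := by linarith [hm.1]
  have h2 : ((x i.castSucc : ℝ) + (y i.castSucc : ℝ)) ≤ 2 * (b i : ℝ) := by linarith [hm.2]
  have h1' : 2 * a i < x i.castSucc + y i.castSucc := by exact_mod_cast h1
  have h2' : x i.castSucc + y i.castSucc ≤ 2 * b i := by exact_mod_cast h2
  have := abs_le.mp hadj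
  omega

lemma edgeIn_offdir {D : ℕ} {a b : Fin D → ℤ} {x y : V D}
    (h : edgeIn (cylinder a b) x y) (i : Fin D)
    (heq : x i.castSucc = y i.castSucc) : a i < x i.castSucc := by
  have hm := (h.2 (mid_mem_seg x y) i).1
  rw [← heq] at hm
  have : (a i : ℝ) < (x i.castSucc : ℝ) := by linarith
  exact_mod_cast this

lemma edgeIn_of_mem {D : ℕ} {a b : Fin D → ℤ} {x y : V D}
    (hx : memCylinder a b x) (hy : memCylinder a b y) (hadj : adj x y) :
    edgeIn (cylinder a b) x y := by
  refine ⟨hadj, ?_⟩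
  rintro p ⟨s, hs0, hs1, hp⟩ i
  have hx' := hx i
  have hy' := hy i
  have hax : (a i : ℝ) < (x i.castSucc : ℝ) := by exact_mod_cast hx'.1
  have hay : (a i : ℝ) < (y i.castSucc : ℝ) := by exact_mod_cast hy'.1
  have hbx : ((x i.castSucc : ℝ)) ≤ (b i : ℝ) := by exact_mod_cast hx'.2
  have hby : ((y i.castSucc : ℝ)) ≤ (b i : ℝ) := by exact_mod_cast hy'.2
  rw [hp i.castSucc]
  constructor
  · nlinarith
  · nlinarith

lemma memCylinder_congr {D : ℕ} {a b : Fin D → ℤ} {x y : V D}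
    (h : ∀ i : Fin D, x i.castSucc = y i.castSucc) :
    memCylinder a b x ↔ memCylinder a b y := by
  unfold memCylinder
  constructor
  · intro H i; rw [← h i]; exact H i
  · intro H i; rw [h i]; exact H i

/-! ### Vertical translates -/

/-- The vertex of the column of `x` at height `h`. -/
def setH {D : ℕ} (x : V D) (h : ℤ) : V D := Function.update x (Fin.last D) h

@[simp] lemma setH_last {D : ℕ} (x : V D) (h : ℤ) : setH x h (Fin.last D) = h :=
  Function.update_self _ _ _

@[simp] lemma setH_castSucc {D : ℕ} (x : V D) (h : ℤ) (i : Fin D) :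
    setH x h i.castSucc = x i.castSucc :=
  Function.update_of_ne (castSucc_ne_last' i) _ _

lemma setH_self {D : ℕ} (x : V D) : setH x (x (Fin.last D)) = x :=
  Function.update_eq_self _ _

lemma memCylinder_setH {D : ℕ} {a b : Fin D → ℤ} (x : V D) (h : ℤ) :
    memCylinder a b (setH x h) ↔ memCylinder a b x :=
  memCylinder_congr fun i => setH_castSucc x h i

lemma setH_succ {D : ℕ} (x : V D) (h : ℤ) :
    setH x (h + 1) = setH x h + unit (Fin.last D) := by
  funext k
  by_cases hk : k = Fin.last D
  · subst hk
    rw [add_unit_apply_self, setH_last, setH_last]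
  · have h1 : (setH x h + unit (Fin.last D)) k = setH x h k := add_unit_apply_ne _ hk
    rw [h1]
    simp [setH, Function.update_of_ne hk]

lemma adj_setH_succ {D : ℕ} (x : V D) (h : ℤ) : adj (setH x h) (setH x (h + 1)) := by
  rw [setH_succ]; exact adj_add_unit _ _

/-! ### Path lemmas -/

lemma pathAvoid_refl {D : ℕ} {R : Set (Fin (D + 1) → ℝ)} {E : Set (Sym2 (V D))} (x : V D) :
    pathAvoid R E x x := ⟨0, fun _ => x, rfl, rfl, fun i hi => absurd hi (by omega)⟩

lemma pathAvoid_single {D : ℕ} {R : Set (Fin (D + 1) → ℝ)} {E : Set (Sym2 (V D))} {x y : V D}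
    (h : edgeIn R x y) (hE : s(x, y) ∉ E) : pathAvoid R E x y := by
  refine ⟨1, fun k => if k = 0 then x else y, by simp, by simp, ?_⟩
  intro i hi
  have hi0 : i = 0 := by omega
  subst hi0
  simpa using ⟨h, hE⟩

lemma pathAvoid_symm {D : ℕ} {R : Set (Fin (D + 1) → ℝ)} {E : Set (Sym2 (V D))} {x y : V D}
    (h : pathAvoid R E x y) : pathAvoid R E y x := by
  obtain ⟨n, γ, h0, hn, hst⟩ := h
  refine ⟨n, fun k => γ (n - k), by simp [hn], by simp [h0], ?_⟩
  intro i hi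
  have h' := hst (n - i - 1) (by omega)
  have e1 : n - i - 1 + 1 = n - i := by omega
  rw [e1] at h'
  have e2 : n - (i + 1) = n - i - 1 := by omega
  constructor
  · show edgeIn R (γ (n - i)) (γ (n - (i + 1)))
    rw [e2]; exact edgeIn_symm h'.1
  · show s(γ (n - i), γ (n - (i + 1))) ∉ E
    rw [e2, Sym2.eq_swap]; exact h'.2

lemma pathAvoid_trans {D : ℕ} {R : Set (Fin (D + 1) → ℝ)} {E : Set (Sym2 (V D))} {x y z : V D}
    (h₁ : pathAvoid R E x y) (h₂ : pathAvoid R E y z) : pathAvoid R E x z := by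
  obtain ⟨n, γ, hγ0, hγn, hγ⟩ := h₁
  obtain ⟨m, δ, hδ0, hδm, hδ⟩ := h₂
  refine ⟨n + m, fun k => if k ≤ n then γ k else δ (k - n), by simp [hγ0], ?_, ?_⟩
  · by_cases hnm : n + m ≤ n
    · have hm : m = 0 := by omega
      subst hm
      simp only [hnm, if_true]
      rw [show n + 0 = n from rfl, hγn, ← hδ0, hδm]
    · simp only [hnm, if_false]
      rw [show n + m - n = m by omega, hδm]
  · intro i hi
    by_cases hin : i < n
    · have e1 : i ≤ n := by omega
      have e2 : i + 1 ≤ n := by omega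
      simp only [e1, e2, if_true]
      exact hγ i hin
    · have e2 : ¬ (i + 1 ≤ n) := by omega
      have hσi : (if i ≤ n then γ i else δ (i - n)) = δ (i - n) := by
        by_cases hin' : i ≤ n
        · have hii : i = n := by omega
          subst hii
          simp only [le_refl, if_true, Nat.sub_self]
          rw [hγn, hδ0]
        · simp [hin']
      simp only [e2, if_false, hσi]
      have e3 : i + 1 - n = (i - n) + 1 := by omega
      rw [e3]
      exact hδ (i - n) (by omega)

/-! ### Column paths -/

lemma colPath {D : ℕ} {a b : Fin D → ℤ} {E : Set (Sym2 (V D))} {x : V D}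
    (hx : memCylinder a b x) (h₁ : ℤ)
    (hE : ∀ h : ℤ, min (x (Fin.last D)) h₁ ≤ h → h + 1 ≤ max (x (Fin.last D)) h₁ →
      s(setH x h, setH x (h + 1)) ∉ E) :
    pathAvoid (cylinder a b) E x (setH x h₁) := by
  set x0 := x (Fin.last D) with hx0
  have hedge : ∀ h : ℤ, edgeIn (cylinder a b) (setH x h) (setH x (h + 1)) :=
    fun h => edgeIn_of_mem ((memCylinder_setH x h).mpr hx) ((memCylinder_setH x (h+1)).mpr hx)
      (adj_setH_succ x h)
  rcases le_or_gt x0 h₁ with hdir | hdir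
  · have hcast : ((h₁ - x0).toNat : ℤ) = h₁ - x0 := Int.toNat_of_nonneg (by omega)
    refine ⟨(h₁ - x0).toNat, fun k => setH x (x0 + k), ?_, ?_, ?_⟩
    · show setH x (x0 + (0 : ℕ)) = x
      rw [show x0 + ((0:ℕ) : ℤ) = x0 by push_cast; ring, hx0, setH_self]
    · show setH x (x0 + ((h₁ - x0).toNat : ℤ)) = setH x h₁
      rw [hcast, show x0 + (h₁ - x0) = h₁ from by ring]
    · intro i hi
      have hi' : (i : ℤ) < h₁ - x0 := by
        have : (i : ℤ) < ((h₁ - x0).toNat : ℤ) := by exact_mod_cast hi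
        omega
      have e : (x0 + ((i+1 : ℕ) : ℤ)) = (x0 + i) + 1 := by push_cast; ring
      constructor
      · show edgeIn (cylinder a b) (setH x (x0 + (i:ℕ))) (setH x (x0 + ((i+1 : ℕ) : ℤ)))
        rw [e]; exact hedge _
      · show s(setH x (x0 + (i:ℕ)), setH x (x0 + ((i+1 : ℕ) : ℤ))) ∉ E
        rw [e]
        refine hE (x0 + i) ?_ ?_
        · have : min x0 h₁ = x0 := min_eq_left hdir
          omega
        · have : max x0 h₁ = h₁ := max_eq_right hdir
          omega
  · have hcast : ((x0 - h₁).toNat : ℤ) = x0 - h₁ := Int.toNat_of_nonneg (by omega)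
    refine ⟨(x0 - h₁).toNat, fun k => setH x (x0 - k), ?_, ?_, ?_⟩
    · show setH x (x0 - (0 : ℕ)) = x
      rw [show x0 - ((0:ℕ) : ℤ) = x0 by push_cast; ring, hx0, setH_self]
    · show setH x (x0 - ((x0 - h₁).toNat : ℤ)) = setH x h₁
      rw [hcast, show x0 - (x0 - h₁) = h₁ from by ring]
    · intro i hi
      have hi' : (i : ℤ) < x0 - h₁ := by
        have : (i : ℤ) < ((x0 - h₁).toNat : ℤ) := by exact_mod_cast hi
        omega
      have ea : setH x (x0 - ((i+1 : ℕ) : ℤ)) = setH x (x0 - (i:ℤ) - 1) :=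
        congrArg (setH x) (by push_cast; ring)
      have eb : setH x (x0 - ((i : ℕ) : ℤ)) = setH x ((x0 - (i:ℤ) - 1) + 1) :=
        congrArg (setH x) (by ring)
      constructor
      · show edgeIn (cylinder a b) (setH x (x0 - (i:ℕ))) (setH x (x0 - ((i+1 : ℕ) : ℤ)))
        rw [ea, eb]
        exact edgeIn_symm (hedge _)
      · show s(setH x (x0 - (i:ℕ)), setH x (x0 - ((i+1 : ℕ) : ℤ))) ∉ E
        rw [ea, eb, Sym2.eq_swap]
        refine hE (x0 - i - 1) ?_ ?_
        · have : min x0 h₁ = h₁ := min_eq_right hdir.le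
          omega
        · have : max x0 h₁ = x0 := max_eq_left hdir.le
          omega

lemma adj_of_eq_except {D : ℕ} {p q : V D} (c : Fin (D + 1))
    (h1 : ∀ k ≠ c, p k = q k) (h2 : |p c - q c| = 1) : adj p q := by
  unfold adj
  have h : ∀ k, |p k - q k| = if k = c then 1 else 0 := by
    intro k
    by_cases hk : k = c
    · subst hk; simp [h2]
    · rw [h1 k hk]; simp [hk]
  rw [Finset.sum_congr rfl fun k _ => h k]
  simp

lemma colEdge {D : ℕ} {a b : Fin D → ℤ} {E : Set (Sym2 (V D))} (hstar : CondStar a b E)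
    {x y₀ : V D} (hx : memCylinder a b x) (hadj : adj x y₀)
    (hy₀L : y₀ (Fin.last D) = x (Fin.last D)) (hout : ¬ memCylinder a b y₀)
    {h : ℤ} (hh : h ≠ 0) : s(setH x h, setH x (h + 1)) ∉ E := by
  intro hE
  obtain ⟨c, hc, hcoord⟩ := adj_cases hadj
  have hcL : c ≠ Fin.last D := by
    intro hcl
    subst hcl
    rcases hc with h' | h'
    · rw [h', add_unit_apply_self] at hy₀L; omega
    · rw [h', sub_unit_apply_self] at hy₀L; omega
  have habs : |x c - y₀ c| = 1 := by
    rcases hc with h' | h'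
    · rw [h', add_unit_apply_self]; simp
    · rw [h', sub_unit_apply_self]; simp
  have hnbr : ∀ h' : ℤ, setH x h' ∈ innerBdry a b := by
    intro h'
    refine ⟨(memCylinder_setH x h').mpr hx, setH y₀ h', ?_, ?_⟩
    · refine adj_of_eq_except c ?_ ?_
      · intro k hk
        by_cases hkl : k = Fin.last D
        · subst hkl; rw [setH_last, setH_last]
        · show (Function.update x (Fin.last D) h' : V D) k
              = (Function.update y₀ (Fin.last D) h' : V D) k
          rw [Function.update_of_ne hkl, Function.update_of_ne hkl]
          exact (hcoord k hk).symm
      · have e1 : setH x h' c = x c := Function.update_of_ne hcL _ _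
        have e2 : setH y₀ h' c = y₀ c := Function.update_of_ne hcL _ _
        rw [e1, e2]; exact habs
    · intro hmem
      exact hout ((memCylinder_setH y₀ h').mp hmem)
  obtain ⟨z, hz, hz0⟩ := hstar _ hE ⟨setH x h, setH x (h+1), rfl, hnbr h, hnbr (h+1)⟩
  rw [setH_succ] at hz
  have heq : setH x h = z := by
    rcases Sym2.eq_iff.mp hz with ⟨h1, _⟩ | ⟨h1, h2⟩
    · exact h1
    · exfalso
      have e1 := congrFun h1 (Fin.last D)
      have e2 := congrFun h2 (Fin.last D)
      rw [add_unit_apply_self] at e1 e2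
      rw [setH_last] at e1 e2
      omega
  have : h = 0 := by rw [← hz0, ← heq, setH_last]
  exact hh this


/-! ### Strays and truncation -/

lemma stray_step {D : ℕ} {a b : Fin D → ℤ} {v z : V D}
    (h : edgeIn (cylinder a b) v z) (hv : ¬ memCylinder a b v) :
    ∃ i : Fin D, ∀ z', edgeIn (cylinder a b) v z' → z' = v + unit i.castSucc := by
  unfold memCylinder at hv
  push_neg at hv
  obtain ⟨i, hi⟩ := hv
  have hcl := edgeIn_closed h i
  have hvi : v i.castSucc = a i := by
    by_cases h' : a i < v i.castSucc
    · have := hi h'; omega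
    · omega
  refine ⟨i, ?_⟩
  intro z' hz'
  obtain ⟨c, hc, hcoord⟩ := adj_cases hz'.1
  have hcc : c = i.castSucc := by
    by_contra hne
    have heq : z' i.castSucc = v i.castSucc := hcoord i.castSucc (fun h'' => hne h''.symm)
    have := edgeIn_offdir hz' i heq.symm
    omega
  subst hcc
  rcases hc with h1 | h1
  · exact h1
  · exfalso
    have hb := (edgeIn_closed (edgeIn_symm hz') i).1
    rw [h1, sub_unit_apply_self] at hb
    omega

/-- The core of the separation property, with explicit witness `N`. -/
def SepCore {D : ℕ} (a b : Fin D → ℤ) (E : Set (Sym2 (V D))) (N : ℤ) : Prop :=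
  ∀ x y : V D, memCylinder a b x → x (Fin.last D) = -N → memCylinder a b y →
    y (Fin.last D) = N → ¬ pathAvoid (cylinder a b) E x y

lemma trunc {D : ℕ} {a b : Fin D → ℤ} {E : Set (Sym2 (V D))} (γ : ℕ → V D) (n : ℕ)
    (hst : ∀ i < n, edgeIn (cylinder a b) (γ i) (γ (i + 1)) ∧ s(γ i, γ (i + 1)) ∉ E)
    (h0m : memCylinder a b (γ 0)) (hnm : memCylinder a b (γ n))
    {M : ℤ} (hM : 0 < M) (h0 : γ 0 (Fin.last D) ≤ -M) (hn : M ≤ γ n (Fin.last D)) :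
    ∃ (m : ℕ) (δ : ℕ → V D), memCylinder a b (δ 0) ∧ δ 0 (Fin.last D) = -M ∧
      memCylinder a b (δ m) ∧ δ m (Fin.last D) = M ∧
      (∀ i < m, edgeIn (cylinder a b) (δ i) (δ (i + 1)) ∧ s(δ i, δ (i + 1)) ∉ E) ∧
      (∀ k ≤ m, -M ≤ δ k (Fin.last D) ∧ δ k (Fin.last D) ≤ M) := by
  classical
  set H : ℕ → ℤ := fun k => γ k (Fin.last D) with hH
  have hstep : ∀ i < n, |H (i + 1) - H i| ≤ 1 := by
    intro i hi
    have := adj_abs_le (hst i hi).1.1 (Fin.last D)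
    rw [abs_sub_comm] at this
    exact this
  have hex : ∃ k, k ≤ n ∧ M ≤ H k := ⟨n, le_rfl, hn⟩
  obtain ⟨k₁, hk₁n, hk₁M, hlt⟩ :
      ∃ k₁, k₁ ≤ n ∧ M ≤ H k₁ ∧ ∀ k < k₁, H k < M := by
    refine ⟨Nat.find hex, (Nat.find_spec hex).1, (Nat.find_spec hex).2, ?_⟩
    intro k hk
    have h' := Nat.find_min hex hk
    push_neg at h'
    exact h' (le_trans (le_of_lt (lt_of_lt_of_le hk (Nat.find_spec hex).1)) le_rfl)
  have hk₁pos : 0 < k₁ := by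
    rcases Nat.eq_zero_or_pos k₁ with h' | h'
    · exfalso; rw [h'] at hk₁M; have : H 0 ≤ -M := h0; omega
    · exact h'
  have hHk₁ : H k₁ = M := by
    have h1 := hstep (k₁ - 1) (by omega)
    have e : k₁ - 1 + 1 = k₁ := by omega
    rw [e] at h1
    have h2 := hlt (k₁ - 1) (by omega)
    have h3 := abs_le.mp h1
    omega
  obtain ⟨k₀, hk₀le, hQk₀, hgt⟩ :
      ∃ k₀, k₀ ≤ k₁ ∧ H k₀ ≤ -M ∧ ∀ k, k₀ < k → k ≤ k₁ → ¬ (H k ≤ -M) :=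
    ⟨Nat.findGreatest (fun k => H k ≤ -M) k₁,
      Nat.findGreatest_le (P := fun k => H k ≤ -M) k₁,
      Nat.findGreatest_spec (P := fun k => H k ≤ -M) (Nat.zero_le k₁)
        (show H 0 ≤ -M from h0),
      fun k h1 h2 => Nat.findGreatest_is_greatest (P := fun k => H k ≤ -M) h1 h2⟩
  have hk₀lt : k₀ < k₁ := by
    rcases eq_or_lt_of_le hk₀le with h' | h'
    · exfalso; rw [h'] at hQk₀; omega
    · exact h'
  have hHk₀ : H k₀ = -M := by
    have h1 := hstep k₀ (by omega)
    have h2 : ¬ (H (k₀ + 1) ≤ -M) := hgt _ (by omega) (by omega)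
    have h3 := abs_le.mp h1
    omega
  have hmem₀ : memCylinder a b (γ k₀) := by
    by_contra hmem
    obtain ⟨i, hi⟩ := stray_step (hst k₀ (by omega)).1 hmem
    have h2 := hi _ (hst k₀ (by omega)).1
    have hH1 : H (k₀ + 1) = H k₀ := by
      show γ (k₀ + 1) (Fin.last D) = γ k₀ (Fin.last D)
      rw [h2, add_unit_apply_ne _ (fun h'' => (castSucc_ne_last' i) h''.symm)]
    exact hgt (k₀ + 1) (by omega) (by omega) (show H (k₀+1) ≤ -M by omega)
  have hmem₁ : memCylinder a b (γ k₁) := by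
    by_contra hmem
    have hedge := (hst (k₁ - 1) (by omega)).1
    have e : k₁ - 1 + 1 = k₁ := by omega
    rw [e] at hedge
    obtain ⟨i, hi⟩ := stray_step (edgeIn_symm hedge) hmem
    have h2 := hi _ (edgeIn_symm hedge)
    have hH1 : H (k₁ - 1) = H k₁ := by
      show γ (k₁ - 1) (Fin.last D) = γ k₁ (Fin.last D)
      rw [h2, add_unit_apply_ne _ (fun h'' => (castSucc_ne_last' i) h''.symm)]
    have := hlt (k₁ - 1) (by omega)
    omega
  refine ⟨k₁ - k₀, fun k => γ (k₀ + k), ?_, ?_, ?_, ?_, ?_, ?_⟩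
  · show memCylinder a b (γ (k₀ + 0)); rwa [Nat.add_zero]
  · show γ (k₀ + 0) (Fin.last D) = -M
    rw [Nat.add_zero]; exact hHk₀
  · show memCylinder a b (γ (k₀ + (k₁ - k₀)))
    rw [show k₀ + (k₁ - k₀) = k₁ by omega]; exact hmem₁
  · show γ (k₀ + (k₁ - k₀)) (Fin.last D) = M
    rw [show k₀ + (k₁ - k₀) = k₁ by omega]; exact hHk₁
  · intro i hi
    show edgeIn (cylinder a b) (γ (k₀ + i)) (γ (k₀ + (i + 1))) ∧
      s(γ (k₀ + i), γ (k₀ + (i + 1))) ∉ E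
    rw [show k₀ + (i + 1) = (k₀ + i) + 1 by omega]
    exact hst (k₀ + i) (by omega)
  · intro k hk
    show -M ≤ H (k₀ + k) ∧ H (k₀ + k) ≤ M
    constructor
    · rcases Nat.eq_zero_or_pos k with h' | h'
      · subst h'; rw [Nat.add_zero]; omega
      · have h'' := hgt (k₀ + k) (by omega) (by omega)
        omega
    · rcases eq_or_lt_of_le (show k₀ + k ≤ k₁ by omega) with h' | h'
      · rw [h']; omega
      · exact (hlt _ h').le

lemma reach_conflict {D : ℕ} {a b : Fin D → ℤ} {E : Set (Sym2 (V D))} {N₁ : ℤ}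
    (hN₁ : 0 < N₁) (hcore : SepCore a b E N₁)
    {z w ztop : V D} (hw : memCylinder a b w)
    (hwL : w (Fin.last D) = -N₁) (hpw : pathAvoid (cylinder a b) E z w)
    (hzt : memCylinder a b ztop) (hztL : N₁ ≤ ztop (Fin.last D))
    (hpt : pathAvoid (cylinder a b) E z ztop) : False := by
  have hp := pathAvoid_trans (pathAvoid_symm hpw) hpt
  obtain ⟨n, γ, h0, hn', hstp⟩ := hp
  obtain ⟨m, δ, hm0, hl0, hmm, hlm, hsteps, -⟩ :=
    trunc γ n hstp (h0 ▸ hw) (hn' ▸ hzt) hN₁ (by rw [h0, hwL]) (by rw [hn']; exact hztL)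
  exact hcore (δ 0) (δ m) hm0 hl0 hmm hlm ⟨m, δ, rfl, rfl, hsteps⟩

/-! ### Height-boundedness of cuts -/

lemma cut_bounded {D : ℕ} {a b : Fin D → ℤ} {E : Set (Sym2 (V D))} {N : ℤ}
    (hcut : IsCutOver a b E) (hN : 0 < N) (hcore : SepCore a b E N) :
    ∀ u v : V D, s(u, v) ∈ E → -N ≤ u (Fin.last D) ∧ u (Fin.last D) ≤ N := by
  intro u v huv
  by_contra hcon
  push_neg at hcon
  have hkey : Separates a b (E \ {s(u, v)}) := by
    refine ⟨fun e he => hcut.1.1 e he.1, N, hN, ?_⟩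
    intro x y hx hxL hy hyL hp
    obtain ⟨n, γ, h0, hn', hstp⟩ := hp
    obtain ⟨m, δ, hm0, hl0, hmm, hlm, hsteps, hhts⟩ :=
      trunc γ n hstp (h0 ▸ hx) (hn' ▸ hy) hN (by rw [h0, hxL]) (by rw [hn', hyL])
    refine hcore (δ 0) (δ m) hm0 hl0 hmm hlm ⟨m, δ, rfl, rfl, ?_⟩
    intro i hi
    refine ⟨(hsteps i hi).1, ?_⟩
    intro hmemE
    have hne : s(δ i, δ (i + 1)) ≠ s(u, v) := by
      intro heq
      have hb1 := hhts i (by omega)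
      have hb2 := hhts (i + 1) (by omega)
      rcases Sym2.eq_iff.mp heq with ⟨h1, h2⟩ | ⟨h1, h2⟩
      · rw [← h1] at hcon
        have := hcon hb1.1
        omega
      · rw [← h2] at hcon
        have := hcon hb2.1
        omega
    exact (hsteps i hi).2 ⟨hmemE, hne⟩
  exact hcut.2 _ (Set.sdiff_singleton_ssubset.mpr huv) hkey

/-! ### Uniform separation witness for height-bounded sets -/

lemma sep_sepCore {D : ℕ} {a b : Fin D → ℤ} {E' : Set (Sym2 (V D))} {N : ℤ} (hN : 0 < N)
    (hbd : ∀ u v : V D, s(u, v) ∈ E' → -N ≤ u (Fin.last D) ∧ u (Fin.last D) ≤ N)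
    (hsep : Separates a b E') : SepCore a b E' N := by
  obtain ⟨N', hN', hcore'⟩ := hsep.2
  intro x y hx hxL hy hyL hp
  rcases le_or_gt N' N with hle | hlt
  · obtain ⟨n, γ, h0, hn', hstp⟩ := hp
    obtain ⟨m, δ, hm0, hl0, hmm, hlm, hsteps, -⟩ :=
      trunc γ n hstp (h0 ▸ hx) (hn' ▸ hy) hN' (by rw [h0, hxL]; omega)
        (by rw [hn', hyL]; omega)
    exact hcore' (δ 0) (δ m) hm0 hl0 hmm hlm ⟨m, δ, rfl, rfl, hsteps⟩
  · have p₁ : pathAvoid (cylinder a b) E' x (setH x (-N')) := by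
      refine colPath hx (-N') ?_
      intro h hmin hmax hmem
      have hb := (hbd _ _ hmem).1
      rw [setH_last] at hb
      have hmax' : max (x (Fin.last D)) (-N') = x (Fin.last D) := max_eq_left (by omega)
      omega
    have p₃ : pathAvoid (cylinder a b) E' y (setH y N') := by
      refine colPath hy N' ?_
      intro h hmin hmax hmem
      have hmem' : s(setH y (h + 1), setH y h) ∈ E' := by rw [Sym2.eq_swap]; exact hmem
      have hb := (hbd _ _ hmem').2
      rw [setH_last] at hb
      have hmin' : min (y (Fin.last D)) N' = y (Fin.last D) := min_eq_left (by omega)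
      omega
    exact hcore' (setH x (-N')) (setH y N') ((memCylinder_setH _ _).mpr hx) (setH_last _ _)
      ((memCylinder_setH _ _).mpr hy) (setH_last _ _)
      (pathAvoid_trans (pathAvoid_symm p₁) (pathAvoid_trans hp p₃))

/-! ### Existence of a minimal cut inside a separating set -/

lemma exists_min_cut {D : ℕ} {a b : Fin D → ℤ} {E₀ : Set (Sym2 (V D))} {N : ℤ} (hN : 0 < N)
    (hcl : ∀ e ∈ E₀, ∃ x y, e = s(x, y) ∧ edgeIn (cylinder a b) x y)
    (hbd : ∀ u v : V D, s(u, v) ∈ E₀ → -N ≤ u (Fin.last D) ∧ u (Fin.last D) ≤ N)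
    (hcore : SepCore a b E₀ N) :
    ∃ F, F ⊆ E₀ ∧ IsCutOver a b F := by
  classical
  set S : Set (Set (Sym2 (V D))) := {F | F ⊆ E₀ ∧ SepCore a b F N} with hS
  have hE₀S : E₀ ∈ S := ⟨subset_rfl, hcore⟩
  have hchain : ∀ c ⊆ S, IsChain (· ⊆ ·) c → c.Nonempty →
      ∃ lb ∈ S, ∀ s ∈ c, lb ⊆ s := by
    intro c hcS hch hcne
    obtain ⟨F₀, hF₀⟩ := hcne
    refine ⟨⋂₀ c, ⟨(Set.sInter_subset_of_mem hF₀).trans (hcS hF₀).1, ?_⟩,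
      fun s hs => Set.sInter_subset_of_mem hs⟩
    intro x y hx hxL hy hyL hp
    obtain ⟨n, γ, h0, hn', hstp⟩ := hp
    have hch' : ∀ i : ℕ, ∃ F ∈ c, (i < n → s(γ i, γ (i + 1)) ∉ F) := by
      intro i
      by_cases hi : i < n
      · have h2 := (hstp i hi).2
        rw [Set.mem_sInter] at h2
        push_neg at h2
        obtain ⟨F, hF, hnF⟩ := h2
        exact ⟨F, hF, fun _ => hnF⟩
      · exact ⟨F₀, hF₀, fun h' => absurd h' hi⟩
    choose g hgc hgn using hch'
    set T : Finset (Set (Sym2 (V D))) := (Finset.range (n + 1)).image g with hT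
    have hTne : T.Nonempty := ⟨g 0, Finset.mem_image_of_mem _ (by simp)⟩
    obtain ⟨Fm, hFmT, hFmmin⟩ := T.exists_minimal hTne
    have hFmc : Fm ∈ c := by
      obtain ⟨i, -, hi⟩ := Finset.mem_image.mp hFmT
      exact hi ▸ hgc i
    have hFmle : ∀ G ∈ T, Fm ⊆ G := by
      intro G hG
      obtain ⟨i, -, hi⟩ := Finset.mem_image.mp hG
      have hGc : G ∈ c := hi ▸ hgc i
      rcases eq_or_ne Fm G with h' | h'
      · exact h'.subset
      · rcases hch hFmc hGc h' with h'' | h''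
        · exact h''
        · exact absurd (lt_of_le_of_ne h'' h'.symm) (LE.le.not_gt (hFmmin hG h'' : Fm ≤ G))
    refine (hcS hFmc).2 x y hx hxL hy hyL ⟨n, γ, h0, hn', ?_⟩
    intro i hi
    refine ⟨(hstp i hi).1, ?_⟩
    intro hmem
    refine hgn i hi ?_
    have hsub : Fm ⊆ g i := hFmle (g i) (Finset.mem_image_of_mem _ (by
      simp only [Finset.mem_range]; omega))
    exact hsub hmem
  obtain ⟨F, hFsub, hFS, hFmin⟩ := zorn_superset_nonempty S hchain E₀ hE₀S
  refine ⟨F, hFS.1, ⟨⟨fun e he => hcl e (hFS.1 he), N, hN, hFS.2⟩, ?_⟩⟩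
  intro E' hE' hsepE'
  have hE'sub : E' ⊆ E₀ := hE'.subset.trans hFS.1
  have hE'core : SepCore a b E' N :=
    sep_sepCore hN (fun u v h' => hbd u v (hE'sub h')) hsepE'
  have : F ⊆ E' := hFmin ⟨hE'sub, hE'core⟩ hE'.subset
  exact hE'.not_subset this


/-! ### Geometry of the union rectangle -/

section Union

variable {D : ℕ} {a b a' b' : Fin D → ℤ} {j : Fin D}

lemma mem_union_iff (hj : a' j = b j) (hother : ∀ i ≠ j, a' i = a i ∧ b' i = b i)
    (hab : ∀ i, a i < b i) (hab' : ∀ i, a' i < b' i) (x : V D) :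
    memCylinder a (Function.update b j (b' j)) x ↔
      memCylinder a b x ∨ memCylinder a' b' x := by
  constructor
  · intro H
    by_cases hx : x j.castSucc ≤ b j
    · left
      intro i
      by_cases hij : i = j
      · subst hij; exact ⟨(H i).1, hx⟩
      · have h' := H i
        rwa [Function.update_of_ne hij] at h'
    · right
      intro i
      by_cases hij : i = j
      · subst hij
        have h' := (H i).2
        rw [Function.update_self] at h'
        exact ⟨by omega, h'⟩
      · obtain ⟨h1, h2⟩ := hother i hij
        have h' := H i
        rw [Function.update_of_ne hij] at h'
        exact ⟨by omega, by omega⟩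
  · intro H i
    rcases H with H | H
    · by_cases hij : i = j
      · subst hij
        rw [Function.update_self]
        have h' := H i
        have := hab' i
        exact ⟨h'.1, by omega⟩
      · rw [Function.update_of_ne hij]; exact H i
    · by_cases hij : i = j
      · subst hij
        rw [Function.update_self]
        have h' := H i
        have := hab i
        exact ⟨by omega, h'.2⟩
      · rw [Function.update_of_ne hij]
        obtain ⟨h1, h2⟩ := hother i hij
        have h' := H i
        exact ⟨by omega, by omega⟩

lemma sides_disjoint (hj : a' j = b j) {x : V D}
    (h1 : memCylinder a b x) (h2 : memCylinder a' b' x) : False := by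
  have e1 := (h1 j).2
  have e2 := (h2 j).1
  omega

lemma cyl₁_subset (hj : a' j = b j) (hab' : ∀ i, a' i < b' i) :
    cylinder a b ⊆ cylinder a (Function.update b j (b' j)) := by
  intro p hp i
  by_cases hij : i = j
  · subst hij
    rw [Function.update_self]
    refine ⟨(hp i).1, le_trans (hp i).2 ?_⟩
    have h1 := hj
    have h2 := hab' i
    exact_mod_cast (by omega : b i ≤ b' i)
  · rw [Function.update_of_ne hij]; exact hp i

lemma cyl₂_subset (hj : a' j = b j) (hother : ∀ i ≠ j, a' i = a i ∧ b' i = b i)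
    (hab : ∀ i, a i < b i) :
    cylinder a' b' ⊆ cylinder a (Function.update b j (b' j)) := by
  intro p hp i
  by_cases hij : i = j
  · subst hij
    rw [Function.update_self]
    refine ⟨lt_of_le_of_lt ?_ (hp i).1, (hp i).2⟩
    have h1 := hj
    have h2 := hab i
    exact_mod_cast (by omega : a i ≤ a' i)
  · rw [Function.update_of_ne hij]
    obtain ⟨h1, h2⟩ := hother i hij
    rw [show ((a i : ℝ)) = ((a' i : ℝ)) by exact_mod_cast h1.symm,
      show ((b i : ℝ)) = ((b' i : ℝ)) by exact_mod_cast h2.symm]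
    exact hp i

lemma cross_step (hj : a' j = b j) {u v : V D} (hadj : adj u v)
    (hu : memCylinder a b u) (hv : memCylinder a' b' v) :
    v = u + unit j.castSucc ∧ u j.castSucc = b j := by
  obtain ⟨c, hc, hcoord⟩ := adj_cases hadj
  have h1 : u j.castSucc ≤ b j := (hu j).2
  have h2 : b j < v j.castSucc := by have := (hv j).1; omega
  have hcc : c = j.castSucc := by
    by_contra hne
    have := hcoord j.castSucc (fun h' => hne h'.symm)
    omega
  subst hcc
  rcases hc with h3 | h3
  · have h4 : v j.castSucc = u j.castSucc + 1 := by rw [h3, add_unit_apply_self]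
    exact ⟨h3, by omega⟩
  · exfalso
    have h4 : v j.castSucc = u j.castSucc - 1 := by rw [h3, sub_unit_apply_self]
    omega

/-- Horizontal interface edges, to be removed when gluing the two cuts. -/
def badSet (j : Fin D) (c : ℤ) : Set (Sym2 (V D)) :=
  {e | ∃ u v : V D, e = s(u, v) ∧ u j.castSucc = c ∧ v j.castSucc = c + 1}

lemma condStar_union (hj : a' j = b j) (hother : ∀ i ≠ j, a' i = a i ∧ b' i = b i)
    (hab : ∀ i, a i < b i) (hab' : ∀ i, a' i < b' i)
    {E₁ E₂ : Set (Sym2 (V D))}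
    (hcl₁ : ∀ e ∈ E₁, ∃ x y, e = s(x, y) ∧ edgeIn (cylinder a b) x y)
    (hstar₁ : CondStar a b E₁)
    (hcl₂ : ∀ e ∈ E₂, ∃ x y, e = s(x, y) ∧ edgeIn (cylinder a' b') x y)
    (hstar₂ : CondStar a' b' E₂) :
    CondStar a (Function.update b j (b' j)) ((E₁ ∪ E₂) \ badSet j (b j)) := by
  rintro e ⟨he, hbad⟩ ⟨p, q, hepq, hp, hq⟩
  rcases he with he | he
  · obtain ⟨u, v, heuv, hedge⟩ := hcl₁ e he
    have huv : u ∈ innerBdry a (Function.update b j (b' j)) ∧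
        v ∈ innerBdry a (Function.update b j (b' j)) := by
      have h' : s(p, q) = s(u, v) := hepq ▸ heuv
      rcases Sym2.eq_iff.mp h' with ⟨h1, h2⟩ | ⟨h1, h2⟩
      · exact ⟨h1 ▸ hp, h2 ▸ hq⟩
      · exact ⟨h2 ▸ hq, h1 ▸ hp⟩
    have hto : ∀ w w' : V D, edgeIn (cylinder a b) w w' →
        w ∈ innerBdry a (Function.update b j (b' j)) → w ∈ innerBdry a b := by
      intro w w' hed hw
      obtain ⟨hwmem, z, hzadj, hzout⟩ := hw
      refine ⟨?_, z, hzadj, fun hmem =>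
        hzout ((mem_union_iff hj hother hab hab' z).mpr (Or.inl hmem))⟩
      intro i
      have hcl := edgeIn_closed hed i
      have hm := hwmem i
      by_cases hij : i = j
      · subst hij; exact ⟨hm.1, hcl.2⟩
      · rwa [Function.update_of_ne hij] at hm
    exact hstar₁ e he ⟨u, v, heuv, hto u v hedge huv.1,
      hto v u (edgeIn_symm hedge) huv.2⟩
  · obtain ⟨u, v, heuv, hedge⟩ := hcl₂ e he
    have huv : u ∈ innerBdry a (Function.update b j (b' j)) ∧
        v ∈ innerBdry a (Function.update b j (b' j)) := by
      have h' : s(p, q) = s(u, v) := hepq ▸ heuv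
      rcases Sym2.eq_iff.mp h' with ⟨h1, h2⟩ | ⟨h1, h2⟩
      · exact ⟨h1 ▸ hp, h2 ▸ hq⟩
      · exact ⟨h2 ▸ hq, h1 ▸ hp⟩
    have hclu := edgeIn_closed hedge j
    have hclv := edgeIn_closed (edgeIn_symm hedge) j
    by_cases hu : b j < u j.castSucc
    · by_cases hv : b j < v j.castSucc
      · -- both strictly inside S₂
        have hto : ∀ w w' : V D, edgeIn (cylinder a' b') w w' → b j < w j.castSucc →
            w ∈ innerBdry a (Function.update b j (b' j)) → w ∈ innerBdry a' b' := by
          intro w w' hed hwj hw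
          obtain ⟨hwmem, z, hzadj, hzout⟩ := hw
          refine ⟨?_, z, hzadj, fun hmem =>
            hzout ((mem_union_iff hj hother hab hab' z).mpr (Or.inr hmem))⟩
          intro i
          have hcl := edgeIn_closed hed i
          have hm := hwmem i
          by_cases hij : i = j
          · subst hij; exact ⟨by omega, hcl.2⟩
          · obtain ⟨h1, h2⟩ := hother i hij
            rw [Function.update_of_ne hij] at hm
            exact ⟨by omega, by omega⟩
        exact hstar₂ e he ⟨u, v, heuv, hto u v hedge hu huv.1,
          hto v u (edgeIn_symm hedge) hv huv.2⟩
      · -- v is on the interface: e ∈ badSet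
        exfalso
        have hvj : v j.castSucc = b j := by omega
        have huj : u j.castSucc = b j + 1 := by
          have hne : v j.castSucc ≠ u j.castSucc := by omega
          obtain ⟨c, hc, hcoord⟩ := adj_cases hedge.1
          have hcc : c = j.castSucc := by
            by_contra hne'
            have := hcoord j.castSucc (fun h' => hne' h'.symm)
            omega
          subst hcc
          rcases hc with h3 | h3
          · exfalso
            have h4 : v j.castSucc = u j.castSucc + 1 := by rw [h3, add_unit_apply_self]
            omega
          · have h4 : v j.castSucc = u j.castSucc - 1 := by rw [h3, sub_unit_apply_self]
            omega
        exact hbad ⟨v, u, heuv.trans Sym2.eq_swap, hvj, by omega⟩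
    · -- u is on the interface: e ∈ badSet
      exfalso
      have huj : u j.castSucc = b j := by omega
      have hvj : v j.castSucc = b j + 1 := by
        have hne : u j.castSucc ≠ v j.castSucc := by
          intro h'
          have := edgeIn_offdir hedge j h'
          omega
        obtain ⟨c, hc, hcoord⟩ := adj_cases hedge.1
        have hcc : c = j.castSucc := by
          by_contra hne'
          have := hcoord j.castSucc (fun h' => hne' h'.symm)
          omega
        subst hcc
        rcases hc with h3 | h3
        · rw [h3, add_unit_apply_self]; omega
        · exfalso
          have h4 : v j.castSucc = u j.castSucc - 1 := by rw [h3, sub_unit_apply_self]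
          omega
      exact hbad ⟨u, v, heuv, huj, hvj⟩

end Union


/-! ### The gluing lemma -/

section Glue

variable {D : ℕ} {a b a' b' : Fin D → ℤ} {j : Fin D} {E₁ E₂ : Set (Sym2 (V D))} {N₁ N₂ : ℤ}

lemma glue_core (hj : a' j = b j) (hother : ∀ i ≠ j, a' i = a i ∧ b' i = b i)
    (hab : ∀ i, a i < b i) (hab' : ∀ i, a' i < b' i)
    (hN₁ : 0 < N₁) (hcore₁ : SepCore a b E₁ N₁) (hstar₁ : CondStar a b E₁)
    (hHB₁ : ∀ u v : V D, s(u, v) ∈ E₁ → -N₁ ≤ u (Fin.last D) ∧ u (Fin.last D) ≤ N₁)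
    (hN₂ : 0 < N₂) (hcore₂ : SepCore a' b' E₂ N₂) (hstar₂ : CondStar a' b' E₂)
    (hHB₂ : ∀ u v : V D, s(u, v) ∈ E₂ → -N₂ ≤ u (Fin.last D) ∧ u (Fin.last D) ≤ N₂) :
    SepCore a (Function.update b j (b' j)) ((E₁ ∪ E₂) \ badSet j (b j)) (N₁ + N₂) := by
  intro x y hx hxL hy hyL hpath
  obtain ⟨n, γ, hγ0, hγn, hst⟩ := hpath
  set N : ℤ := N₁ + N₂ with hNdef
  set A : V D → Prop := fun z =>
    (memCylinder a b z ∧ ∃ w, memCylinder a b w ∧ w (Fin.last D) = -N₁ ∧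
      pathAvoid (cylinder a b) E₁ z w) ∨
    (memCylinder a' b' z ∧ ∃ w, memCylinder a' b' w ∧ w (Fin.last D) = -N₂ ∧
      pathAvoid (cylinder a' b') E₂ z w) with hA
  -- base : the starting point is in A
  have base : A x := by
    rcases (mem_union_iff hj hother hab hab' x).mp hx with hx1 | hx2
    · left
      refine ⟨hx1, setH x (-N₁), (memCylinder_setH _ _).mpr hx1, setH_last _ _, ?_⟩
      refine colPath hx1 (-N₁) ?_
      intro h hmin hmax hmem
      have hb := (hHB₁ _ _ hmem).1
      rw [setH_last] at hb
      have hmax' : max (x (Fin.last D)) (-N₁) = -N₁ := max_eq_right (by omega)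
      omega
    · right
      refine ⟨hx2, setH x (-N₂), (memCylinder_setH _ _).mpr hx2, setH_last _ _, ?_⟩
      refine colPath hx2 (-N₂) ?_
      intro h hmin hmax hmem
      have hb := (hHB₂ _ _ hmem).1
      rw [setH_last] at hb
      have hmax' : max (x (Fin.last D)) (-N₂) = -N₂ := max_eq_right (by omega)
      omega
  -- the inductive step
  have step : ∀ u v : V D, A u →
      edgeIn (cylinder a (Function.update b j (b' j))) u v →
      s(u, v) ∉ (E₁ ∪ E₂) \ badSet j (b j) →
      memCylinder a (Function.update b j (b' j)) v → A v := by
    intro u v hAu hedge hnot hv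
    rcases hAu with ⟨hu1, w, hwm, hwL, hwp⟩ | ⟨hu2, w, hwm, hwL, hwp⟩ <;>
      rcases (mem_union_iff hj hother hab hab' v).mp hv with hv1 | hv2
    · -- side 1 to side 1
      have hedge₁ : edgeIn (cylinder a b) u v := edgeIn_of_mem hu1 hv1 hedge.1
      have hnotE₁ : s(u, v) ∉ E₁ := by
        intro hmem
        refine hnot ⟨Or.inl hmem, ?_⟩
        rintro ⟨p, q, hpq, hpj, hqj⟩
        rcases Sym2.eq_iff.mp hpq with ⟨h1, h2⟩ | ⟨h1, h2⟩
        · have hqv := (hv1 j).2; rw [← h2] at hqj; omega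
        · have hqu := (hu1 j).2; rw [← h1] at hqj; omega
      exact Or.inl ⟨hv1, w, hwm, hwL,
        pathAvoid_trans (pathAvoid_single (edgeIn_symm hedge₁)
          (by rw [Sym2.eq_swap]; exact hnotE₁)) hwp⟩
    · -- side 1 to side 2 : interface crossing
      obtain ⟨hvu, huj⟩ := cross_step hj hedge.1 hu1 hv2
      have hout1 : ¬ memCylinder a b (u + unit j.castSucc) := by
        intro hmem
        have := (hmem j).2
        rw [add_unit_apply_self] at this
        omega
      have huL : u (Fin.last D) ≤ 0 := by
        by_contra hpos
        push_neg at hpos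
        refine reach_conflict hN₁ hcore₁ hwm hwL hwp
          ((memCylinder_setH _ _).mpr hu1) (by rw [setH_last]) ?_
        refine colPath hu1 N₁ ?_
        intro h hmin hmax
        have hmin' : min (u (Fin.last D)) N₁ = min (u (Fin.last D)) N₁ := rfl
        refine colEdge hstar₁ hu1 (adj_add_unit u j.castSucc) ?_ hout1 ?_
        · exact add_unit_apply_ne _ (fun h' => (castSucc_ne_last' j) h'.symm)
        · have h1 : 1 ≤ min (u (Fin.last D)) N₁ := le_min (by omega) (by omega)
          omega
      have hvL : v (Fin.last D) = u (Fin.last D) := by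
        rw [hvu, add_unit_apply_ne _ (fun h' => (castSucc_ne_last' j) h'.symm)]
      have hout2 : ¬ memCylinder a' b' (v - unit j.castSucc) := by
        intro hmem
        have := (hmem j).1
        rw [hvu] at this
        have e1 : (u + unit j.castSucc - unit j.castSucc) j.castSucc = u j.castSucc := by
          rw [sub_unit_apply_self, add_unit_apply_self]; ring
        omega
      refine Or.inr ⟨hv2, setH v (-N₂), (memCylinder_setH _ _).mpr hv2, setH_last _ _, ?_⟩
      refine colPath hv2 (-N₂) ?_
      intro h hmin hmax
      refine colEdge hstar₂ hv2 (adj_sub_unit v j.castSucc) ?_ hout2 ?_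
      · exact sub_unit_apply_ne _ (fun h' => (castSucc_ne_last' j) h'.symm)
      · have h1 : max (v (Fin.last D)) (-N₂) ≤ 0 := max_le (by omega) (by omega)
        omega
    · -- side 2 to side 1 : interface crossing
      obtain ⟨huv, hvj⟩ := cross_step hj (adj_symm' hedge.1) hv1 hu2
      have huj : u j.castSucc = b j + 1 := by
        have e2 : u j.castSucc = v j.castSucc + 1 := by rw [huv, add_unit_apply_self]
        omega
      have hout2 : ¬ memCylinder a' b' (u - unit j.castSucc) := by
        intro hmem
        have h' := (hmem j).1
        have e1 : (u - unit j.castSucc) j.castSucc = u j.castSucc - 1 :=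
          sub_unit_apply_self _ _
        omega
      have huL : u (Fin.last D) ≤ 0 := by
        by_contra hpos
        push_neg at hpos
        refine reach_conflict hN₂ hcore₂ hwm hwL hwp
          ((memCylinder_setH _ _).mpr hu2) (by rw [setH_last]) ?_
        refine colPath hu2 N₂ ?_
        intro h hmin hmax
        refine colEdge hstar₂ hu2 (adj_sub_unit u j.castSucc) ?_ hout2 ?_
        · exact sub_unit_apply_ne _ (fun h' => (castSucc_ne_last' j) h'.symm)
        · have h1 : 1 ≤ min (u (Fin.last D)) N₂ := le_min (by omega) (by omega)
          omega
      have hvL : v (Fin.last D) = u (Fin.last D) := by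
        rw [huv, add_unit_apply_ne _ (fun h' => (castSucc_ne_last' j) h'.symm)]
      have hout1 : ¬ memCylinder a b (v + unit j.castSucc) := by
        intro hmem
        have h' := (hmem j).2
        rw [add_unit_apply_self] at h'
        omega
      refine Or.inl ⟨hv1, setH v (-N₁), (memCylinder_setH _ _).mpr hv1, setH_last _ _, ?_⟩
      refine colPath hv1 (-N₁) ?_
      intro h hmin hmax
      refine colEdge hstar₁ hv1 (adj_add_unit v j.castSucc) ?_ hout1 ?_
      · exact add_unit_apply_ne _ (fun h' => (castSucc_ne_last' j) h'.symm)
      · have h1 : max (v (Fin.last D)) (-N₁) ≤ 0 := max_le (by omega) (by omega)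
        omega
    · -- side 2 to side 2
      have hedge₂ : edgeIn (cylinder a' b') u v := edgeIn_of_mem hu2 hv2 hedge.1
      have hnotE₂ : s(u, v) ∉ E₂ := by
        intro hmem
        refine hnot ⟨Or.inr hmem, ?_⟩
        rintro ⟨p, q, hpq, hpj, hqj⟩
        rcases Sym2.eq_iff.mp hpq with ⟨h1, h2⟩ | ⟨h1, h2⟩
        · have hpu := (hu2 j).1; rw [← h1] at hpj; omega
        · have hpv := (hv2 j).1; rw [← h2] at hpj; omega
      exact Or.inr ⟨hv2, w, hwm, hwL,
        pathAvoid_trans (pathAvoid_single (edgeIn_symm hedge₂)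
          (by rw [Sym2.eq_swap]; exact hnotE₂)) hwp⟩
  -- induction along the path
  have main : ∀ k, k ≤ n → memCylinder a (Function.update b j (b' j)) (γ k) → A (γ k) := by
    intro k
    induction k using Nat.strong_induction_on with
    | _ k ih =>
      intro hk hmem
      rcases Nat.eq_zero_or_pos k with hk0 | hkpos
      · subst hk0; rw [hγ0]; exact base
      · by_cases hm : memCylinder a (Function.update b j (b' j)) (γ (k - 1))
        · have hA' := ih (k - 1) (by omega) (by omega) hm
          have hs := hst (k - 1) (by omega)
          rw [show k - 1 + 1 = k by omega] at hs
          exact step _ _ hA' hs.1 hs.2 hmem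
        · have hs := hst (k - 1) (by omega)
          rw [show k - 1 + 1 = k by omega] at hs
          obtain ⟨i, hi⟩ := stray_step hs.1 hm
          have hk2 : 2 ≤ k := by
            by_contra h'
            have hk1 : k = 1 := by omega
            subst hk1
            exact hm (by rw [show (1:ℕ) - 1 = 0 from rfl, hγ0]; exact hx)
          have hs2 := hst (k - 2) (by omega)
          rw [show k - 2 + 1 = k - 1 by omega] at hs2
          have h3 : γ (k - 2) = γ (k - 1) + unit i.castSucc := hi _ (edgeIn_symm hs2.1)
          have h4 : γ (k - 2) = γ k := by rw [h3, ← hi _ hs.1]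
          rw [← h4]
          exact ih (k - 2) (by omega) (by omega) (h4 ▸ hmem)
  -- conclusion
  have hAy : A y := by
    have := main n le_rfl (by rw [hγn]; exact hy)
    rwa [hγn] at this
  rcases hAy with ⟨hym, w, hwm, hwL, hwp⟩ | ⟨hym, w, hwm, hwL, hwp⟩
  · exact reach_conflict hN₁ hcore₁ hwm hwL hwp hym (by omega) (pathAvoid_refl y)
  · exact reach_conflict hN₂ hcore₂ hwm hwL hwp hym (by omega) (pathAvoid_refl y)

end Glue


/-! ### The construction of the glued cut -/

lemma construct_cut {D : ℕ} {a b a' b' : Fin D → ℤ} {j : Fin D} {E₁ E₂ : Set (Sym2 (V D))}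
    (hj : a' j = b j) (hother : ∀ i ≠ j, a' i = a i ∧ b' i = b i)
    (hab : ∀ i, a i < b i) (hab' : ∀ i, a' i < b' i)
    (hcut₁ : IsCutOver a b E₁) (hstar₁ : CondStar a b E₁)
    (hcut₂ : IsCutOver a' b' E₂) (hstar₂ : CondStar a' b' E₂) :
    ∃ F, F ⊆ E₁ ∪ E₂ ∧ IsCutOver a (Function.update b j (b' j)) F ∧
      CondStar a (Function.update b j (b' j)) F := by
  obtain ⟨N₁, hN₁, hcore₁⟩ := hcut₁.1.2
  obtain ⟨N₂, hN₂, hcore₂⟩ := hcut₂.1.2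
  have hcl₁ := hcut₁.1.1
  have hcl₂ := hcut₂.1.1
  have hHB₁ := cut_bounded hcut₁ hN₁ hcore₁
  have hHB₂ := cut_bounded hcut₂ hN₂ hcore₂
  set E₀ : Set (Sym2 (V D)) := (E₁ ∪ E₂) \ badSet j (b j) with hE₀
  have hbd₀ : ∀ u v : V D, s(u, v) ∈ E₀ →
      -(N₁ + N₂) ≤ u (Fin.last D) ∧ u (Fin.last D) ≤ N₁ + N₂ := by
    rintro u v ⟨h', -⟩
    rcases h' with h' | h'
    · have := hHB₁ u v h'; omega
    · have := hHB₂ u v h'; omega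
  have hcl₀ : ∀ e ∈ E₀, ∃ x y, e = s(x, y) ∧
      edgeIn (cylinder a (Function.update b j (b' j))) x y := by
    rintro e ⟨h', -⟩
    rcases h' with h' | h'
    · obtain ⟨x, y, hexy, hed⟩ := hcl₁ e h'
      exact ⟨x, y, hexy, edgeIn_mono (cyl₁_subset hj hab') hed⟩
    · obtain ⟨x, y, hexy, hed⟩ := hcl₂ e h'
      exact ⟨x, y, hexy, edgeIn_mono (cyl₂_subset hj hother hab) hed⟩
  have hcore₀ : SepCore a (Function.update b j (b' j)) E₀ (N₁ + N₂) :=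
    glue_core hj hother hab hab' hN₁ hcore₁ hstar₁ hHB₁ hN₂ hcore₂ hstar₂ hHB₂
  obtain ⟨F, hFsub, hFcut⟩ := exists_min_cut (by omega : (0:ℤ) < N₁ + N₂) hcl₀ hbd₀ hcore₀
  refine ⟨F, hFsub.trans Set.diff_subset, hFcut, ?_⟩
  intro e he hb
  exact condStar_union hj hother hab hab' hcl₁ hstar₁ hcl₂ hstar₂ e (hFsub he) hb

/-! ### Sums of capacities -/

lemma tsum_subset_le {α : Type*} {F G : Set α} (h : F ⊆ G) (f : α → ℝ≥0∞) :
    ∑' e : F, f e ≤ ∑' e : G, f e := by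
  rw [tsum_subtype, tsum_subtype]
  exact ENNReal.tsum_le_tsum fun e =>
    Set.indicator_le_indicator_of_subset h (fun _ => zero_le) e

lemma tsum_union_le' {α : Type*} (F G : Set α) (f : α → ℝ≥0∞) :
    ∑' e : ↥(F ∪ G), f e ≤ (∑' e : F, f e) + ∑' e : G, f e := by
  classical
  rw [tsum_subtype, tsum_subtype, tsum_subtype, ← ENNReal.tsum_add]
  refine ENNReal.tsum_le_tsum fun e => ?_
  by_cases hF : e ∈ F <;> by_cases hG : e ∈ G <;>
    simp [Set.indicator_apply, Set.mem_union, hF, hG]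

end TauSubadd

/-- subadditivity of `τ`: if `S₁ = ∏(aᵢ, bᵢ]` and `S₂ = ∏(a'ᵢ, b'ᵢ]` are
two disjoint hyper-rectangles with a common side (stacked in the direction `j`), then
`τ(S₁ ∪ S₂) ≤ τ(S₁) + τ(S₂)`. -/
theorem tau_subadditive
    (D : ℕ) (hD : 1 ≤ D) (t : Config D) (ht : ∀ e, 0 ≤ t e)
    (a b a' b' : Fin D → ℤ) (j : Fin D)
    (hab : ∀ i, a i < b i) (hab' : ∀ i, a' i < b' i)
    (hj : a' j = b j) (hother : ∀ i ≠ j, a' i = a i ∧ b' i = b i) :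
    tauRect t a (Function.update b j (b' j)) ≤ tauRect t a b + tauRect t a' b' := by
  classical
  have key : ∀ (p : {E : Set (Sym2 (V D)) // IsCutOver a b E ∧ CondStar a b E})
      (q : {E : Set (Sym2 (V D)) // IsCutOver a' b' E ∧ CondStar a' b' E}),
      tauRect t a (Function.update b j (b' j)) ≤
        (∑' e : p.1, ENNReal.ofReal (t e.1)) + ∑' e : q.1, ENNReal.ofReal (t e.1) := by
    intro p q
    obtain ⟨F, hFsub, hFcut, hFstar⟩ :=
      construct_cut hj hother hab hab' p.2.1 p.2.2 q.2.1 q.2.2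
    have h1 : tauRect t a (Function.update b j (b' j)) ≤
        ∑' e : F, ENNReal.ofReal (t e.1) :=
      iInf_le (fun (E : {E : Set (Sym2 (V D)) //
        IsCutOver a (Function.update b j (b' j)) E ∧
        CondStar a (Function.update b j (b' j)) E}) =>
          ∑' e : E.1, ENNReal.ofReal (t e.1)) ⟨F, hFcut, hFstar⟩
    refine h1.trans ?_
    refine (tsum_subset_le hFsub (fun e => ENNReal.ofReal (t e))).trans ?_
    exact tsum_union_le' p.1 q.1 (fun e => ENNReal.ofReal (t e))
  have h2 : tauRect t a (Function.update b j (b' j)) ≤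
      ⨅ (p : {E : Set (Sym2 (V D)) // IsCutOver a b E ∧ CondStar a b E}),
      ⨅ (q : {E : Set (Sym2 (V D)) // IsCutOver a' b' E ∧ CondStar a' b' E}),
        ((∑' e : p.1, ENNReal.ofReal (t e.1)) + ∑' e : q.1, ENNReal.ofReal (t e.1)) :=
    le_iInf fun p => le_iInf fun q => key p q
  refine h2.trans ?_
  simp only [tauRect]
  rw [ENNReal.iInf_add]
  exact iInf_mono fun p => le_of_eq ENNReal.add_iInf.symm

end FirstPassagePercolation
end
end
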